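/- Let m be a positive integer, v ∈ ℤⁿ an integer vector, u its shortest m-representative (u ≡ v (mod m) with −m/2 < uᵢ ≤ m/2 for all i), and w a perfect m-representative of v (w ≡ v (mod m), eᵀw = m, wᵀw = m²). Assume some entry of v is not divisible by m. Then the Hamming distance between w and u restricted to the coordinates where v ≢ 0 (mod m) is at most 3; moreover, for every index i with wᵢ ≠ uᵢ, either wᵢ = uᵢ − m with uᵢ > 0, or wᵢ = uᵢ + m with uᵢ < 0. -/

import Mathlib

theorem stmt7 (n : ℕ) (m : ℕ) (hm : 0 < m) (v u w : Fin n → ℤ)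
    (hv : ∃ i, ¬ ((m : ℤ) ∣ v i))
    -- u is the shortest m-representative of v: u ≡ v (mod m), −m/2 < uᵢ ≤ m/2
    (hu_cong : ∀ i, u i ≡ v i [ZMOD (m : ℤ)])
    (hu_short : ∀ i, -(m : ℤ) < 2 * u i ∧ 2 * u i ≤ (m : ℤ))
    -- w is a perfect m-representative of v
    (hw_cong : ∀ i, w i ≡ v i [ZMOD (m : ℤ)])
    (hw_sum : ∑ i, w i = (m : ℤ))
    (hw_norm : ∑ i, w i * w i = (m : ℤ) ^ 2) :
    (Finset.univ.filter (fun i => ¬ ((m : ℤ) ∣ v i) ∧ w i ≠ u i)).card ≤ 3 ∧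
    (∀ i, w i ≠ u i →
      (w i = u i - (m : ℤ) ∧ 0 < u i) ∨ (w i = u i + (m : ℤ) ∧ u i < 0)) := by
  have hM : (0:ℤ) < (m:ℤ) := by exact_mod_cast hm
  have hwsq : ∀ i, w i * w i ≤ (m:ℤ)^2 := by
    intro i
    calc w i * w i ≤ ∑ j, w j * w j :=
          Finset.single_le_sum (fun j _ => mul_self_nonneg (w j)) (Finset.mem_univ i)
      _ = (m:ℤ)^2 := hw_norm
  have hwb : ∀ i, -(m:ℤ) ≤ w i ∧ w i ≤ (m:ℤ) := by
    intro i; have := hwsq i; constructor <;> nlinarith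
  have hzero : ∀ i, w i * w i = (m:ℤ)^2 → ∀ j, j ≠ i → w j = 0 := by
    intro i hi j hj
    have hadd := Finset.add_sum_erase Finset.univ (fun k => w k * w k) (Finset.mem_univ i)
    have h1 : ∑ k ∈ Finset.univ.erase i, w k * w k = 0 := by
      rw [hw_norm] at hadd; linarith
    have h2 := (Finset.sum_eq_zero_iff_of_nonneg (fun k _ => mul_self_nonneg (w k))).mp h1 j
      (Finset.mem_erase.mpr ⟨hj, Finset.mem_univ j⟩)
    exact mul_self_eq_zero.mp h2
  have hsum_others : ∀ i, (∀ j, j ≠ i → w j = 0) → (m:ℤ) = w i := by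
    intro i hj
    rw [← hw_sum, ← Finset.add_sum_erase Finset.univ w (Finset.mem_univ i)]
    have : ∑ k ∈ Finset.univ.erase i, w k = 0 :=
      Finset.sum_eq_zero (fun k hk => hj k (Finset.mem_erase.mp hk).1)
    rw [this, add_zero]
  have part2 : ∀ i, w i ≠ u i →
      (w i = u i - (m : ℤ) ∧ 0 < u i) ∨ (w i = u i + (m : ℤ) ∧ u i < 0) := by
    intro i hne
    obtain ⟨k, hk⟩ : (m:ℤ) ∣ u i - w i := ((hw_cong i).trans (hu_cong i).symm).dvd
    have hub := hu_short i
    have hwbi := hwb i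
    have hk1 : k = 1 ∨ k = -1 := by
      have hk0 : k ≠ 0 := by rintro rfl; apply hne; linarith [hk]
      have hlt1 : -2 < k := by nlinarith
      have hlt2 : k < 2 := by nlinarith
      omega
    rcases hk1 with rfl | rfl
    · -- w i = u i - m
      left
      have hw' : w i = u i - m := by linarith [hk]
      refine ⟨hw', ?_⟩
      by_contra h
      push_neg at h
      have hu0 : u i = 0 := by linarith [hwbi.1]
      have hwi : w i = -(m:ℤ) := by rw [hw', hu0]; ring
      have hwiw : w i * w i = (m:ℤ)^2 := by rw [hwi]; ring
      have := hsum_others i (hzero i hwiw)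
      rw [hwi] at this
      linarith
    · -- w i = u i + m
      right
      have hw' : w i = u i + m := by linarith [hk]
      refine ⟨hw', ?_⟩
      by_contra h
      push_neg at h
      have hu0 : u i = 0 := by linarith [hwbi.2]
      have hwi : w i = (m:ℤ) := by rw [hw', hu0]; ring
      have hwiw : w i * w i = (m:ℤ)^2 := by rw [hwi]; ring
      have hz := hzero i hwiw
      obtain ⟨j, hj⟩ := hv
      apply hj
      rcases eq_or_ne j i with rfl | hji
      · have : (m:ℤ) ∣ v j - w j := (hw_cong j).dvd
        rw [hwi] at this
        have h2 := dvd_add this (dvd_refl (m:ℤ))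
        simpa using h2
      · have : (m:ℤ) ∣ v j - w j := (hw_cong j).dvd
        rw [hz j hji] at this
        simpa using this
  refine ⟨?_, part2⟩
  by_contra hcard
  push_neg at hcard
  set p : Fin n → Prop := fun i => ¬ ((m : ℤ) ∣ v i) ∧ w i ≠ u i with hp
  set S := Finset.univ.filter p with hS
  have hsub : ∀ i ∈ S, (m:ℤ)^2 ≤ (2 * w i)^2 := by
    intro i hi
    rw [hS, Finset.mem_filter] at hi
    rcases part2 i hi.2.2 with ⟨hw', hu'⟩ | ⟨hw', hu'⟩
    · have h2 := (hu_short i).2; nlinarith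
    · have h1 := (hu_short i).1; nlinarith
  have htot : ∑ i, (2*w i)^2 = 4*(m:ℤ)^2 := by
    have : ∑ i, (2*w i)^2 = 4 * ∑ i, w i * w i := by
      rw [Finset.mul_sum]; exact Finset.sum_congr rfl (fun i _ => by ring)
    rw [this, hw_norm]
  have hSsum : ∑ i ∈ S, (2*w i)^2 ≤ 4*(m:ℤ)^2 := by
    calc ∑ i ∈ S, (2*w i)^2 ≤ ∑ i, (2*w i)^2 :=
          Finset.sum_le_sum_of_subset_of_nonneg (Finset.subset_univ S)
            (fun i _ _ => sq_nonneg _)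
      _ = 4*(m:ℤ)^2 := htot
  have hSlow : (S.card : ℤ) * (m:ℤ)^2 ≤ ∑ i ∈ S, (2*w i)^2 := by
    calc (S.card : ℤ) * (m:ℤ)^2 = ∑ _i ∈ S, (m:ℤ)^2 := by
          rw [Finset.sum_const, nsmul_eq_mul]
      _ ≤ ∑ i ∈ S, (2*w i)^2 := Finset.sum_le_sum hsub
  have hm2 : (0:ℤ) < (m:ℤ)^2 := by positivity
  have hcard4 : S.card = 4 := by
    have h4 : (S.card : ℤ) ≤ 4 := by nlinarith
    have h4' : S.card ≤ 4 := by exact_mod_cast h4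
    omega
  have hEq : ∑ i ∈ S, (2*w i)^2 = 4*(m:ℤ)^2 := by
    apply le_antisymm hSsum
    calc (4:ℤ)*(m:ℤ)^2 = (S.card : ℤ) * (m:ℤ)^2 := by rw [hcard4]; norm_num
      _ ≤ _ := hSlow
  have heach : ∀ i ∈ S, (2*w i)^2 = (m:ℤ)^2 := by
    intro i hi
    have hz : ∑ j ∈ S, ((2*w j)^2 - (m:ℤ)^2) = 0 := by
      rw [Finset.sum_sub_distrib, hEq, Finset.sum_const, nsmul_eq_mul, hcard4]
      norm_num
    have := (Finset.sum_eq_zero_iff_of_nonneg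
      (fun j hj => by linarith [hsub j hj])).mp hz i hi
    linarith
  have hneg : ∀ i ∈ S, 2 * w i = -(m:ℤ) := by
    intro i hi
    have he := heach i hi
    have hfact : (2*w i - m) * (2*w i + m) = 0 := by nlinarith
    have hiS := hi
    rw [hS, Finset.mem_filter] at hiS
    rcases part2 i hiS.2.2 with ⟨hw', hu'⟩ | ⟨hw', hu'⟩
    · have h2 := (hu_short i).2
      rcases mul_eq_zero.mp hfact with h | h
      · linarith
      · linarith
    · have h1 := (hu_short i).1
      rcases mul_eq_zero.mp hfact with h | h
      · linarith
      · linarith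
  have hoff : ∀ i ∈ Finset.univ.filter (fun i => ¬ p i), w i = 0 := by
    have hsplit := Finset.sum_filter_add_sum_filter_not Finset.univ p (fun i => (2*w i)^2)
    rw [htot] at hsplit
    have h0 : ∑ i ∈ Finset.univ.filter (fun i => ¬ p i), (2*w i)^2 = 0 := by
      have : ∑ i ∈ Finset.univ.filter p, (2*w i)^2 = 4*(m:ℤ)^2 := hEq
      linarith
    intro i hi
    have := (Finset.sum_eq_zero_iff_of_nonneg (fun j _ => sq_nonneg _)).mp h0 i hi
    have : 2 * w i = 0 := by nlinarith
    linarith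
  have hsplit2 := Finset.sum_filter_add_sum_filter_not Finset.univ p w
  rw [hw_sum] at hsplit2
  have hA : ∑ i ∈ S, w i = -2*(m:ℤ) := by
    have : ∑ i ∈ S, (2 * w i) = ∑ _i ∈ S, (-(m:ℤ)) :=
      Finset.sum_congr rfl hneg
    rw [Finset.sum_const, nsmul_eq_mul, hcard4] at this
    have h2 : ∑ i ∈ S, (2 * w i) = 2 * ∑ i ∈ S, w i := by
      rw [Finset.mul_sum]
    rw [h2] at this
    push_cast at this
    linarith
  have hB : ∑ i ∈ Finset.univ.filter (fun i => ¬ p i), w i = 0 :=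
    Finset.sum_eq_zero hoff
  rw [hA, hB] at hsplit2
  linarith
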